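/- Suppose g ∈ ℝⁿ, H is a self-adjoint operator on ℝⁿ, λ ≥ 0, σ ≥ 0, and s ∈ ℝⁿ satisfy (H + σ‖g‖^{1/2}I + λI)s = −g and H + σ‖g‖^{1/2}I + λI ⪰ 0, and suppose ‖∇P(x) − g‖ ≤ ε₁ and ‖∇²P(x) − H‖ ≤ ε₂ (operator norm). Then P(x+s) ≤ P(x) − ½(σ‖g‖^{1/2} + λ)‖s‖² + ε₁‖s‖ + (ε₂/2)‖s‖² + (L₂/6)‖s‖³. -/

import Mathlib

noncomputable section

open RealInnerProductSpace

/-- `ℝⁿ` as a Euclidean space. -/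
abbrev En (n : ℕ) := EuclideanSpace ℝ (Fin n)

/-- The Hessian of `P` at `x`, as the derivative of the gradient map. -/
def hessP {n : ℕ} (P : En n → ℝ) (x : En n) : En n →L[ℝ] En n := fderiv ℝ (gradient P) x

section aux

variable {n : ℕ}

/-- The inverse of `toDual`, as a real-linear isometry equivalence. -/
def dualIso (n : ℕ) : StrongDual ℝ (En n) ≃ₗᵢ[ℝ] En n :=
  { toFun := (InnerProductSpace.toDual ℝ (En n)).symm
    invFun := InnerProductSpace.toDual ℝ (En n)
    map_add' := fun a b => map_add _ a b
    map_smul' := fun c f => by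
      simpa using (InnerProductSpace.toDual ℝ (En n)).symm.map_smul' c f
    left_inv := fun f => (InnerProductSpace.toDual ℝ (En n)).apply_symm_apply f
    right_inv := fun v => (InnerProductSpace.toDual ℝ (En n)).symm_apply_apply v
    norm_map' := fun f => (InnerProductSpace.toDual ℝ (En n)).symm.norm_map f }

/-- Second-order Taylor bound with Lipschitz Hessian. -/
theorem taylor_bound (P : En n → ℝ) (L₂ : ℝ)
    (hP : ContDiff ℝ 2 P)
    (hhessLip : ∀ x x' : En n, ‖hessP P x - hessP P x'‖ ≤ L₂ * ‖x - x'‖)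
    (x s : En n) :
    P (x + s) ≤ P x + ⟪gradient P x, s⟫ + 1 / 2 * ⟪hessP P x s, s⟫ + L₂ / 6 * ‖s‖ ^ 3 := by
  have hPd : Differentiable ℝ P := hP.differentiable (by norm_num)
  have hgradC : ContDiff ℝ 1 (gradient P) := by
    have h1 : ContDiff ℝ 1 (fderiv ℝ P) := hP.fderiv_right (by norm_num)
    have h2 : gradient P = fun y => dualIso n (fderiv ℝ P y) := rfl
    rw [h2]
    exact ((dualIso n).contDiff).comp h1
  have hgradD : Differentiable ℝ (gradient P) := hgradC.differentiable (by norm_num)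
  have hγ : ∀ t : ℝ, HasDerivAt (fun t : ℝ => x + t • s) s t := by
    intro t
    simpa using ((hasDerivAt_id t).smul_const s).const_add x
  -- derivative of t ↦ P (x + t • s)
  have hφ : ∀ t : ℝ, HasDerivAt (fun t : ℝ => P (x + t • s))
      (⟪gradient P (x + t • s), s⟫) t := by
    intro t
    have h1 : HasGradientAt P (gradient P (x + t • s)) (x + t • s) :=
      (hPd (x + t • s)).hasGradientAt
    have := h1.hasFDerivAt.comp_hasDerivAt t (hγ t)
    exact this
  -- derivative of t ↦ gradient P (x + t • s)
  have hgrad' : ∀ t : ℝ, HasDerivAt (fun t : ℝ => gradient P (x + t • s))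
      (hessP P (x + t • s) s) t := by
    intro t
    exact (hgradD (x + t • s)).hasFDerivAt.comp_hasDerivAt t (hγ t)
  -- derivative of t ↦ ⟪gradient P (x + t • s), s⟫
  have hψ : ∀ t : ℝ, HasDerivAt (fun t : ℝ => ⟪gradient P (x + t • s), s⟫)
      (⟪hessP P (x + t • s) s, s⟫) t := by
    intro t
    have := HasDerivAt.inner ℝ (hgrad' t) (hasDerivAt_const t s)
    simpa [real_inner_comm] using this
  set c : ℝ := ⟪gradient P x, s⟫ with hc
  set q : ℝ := ⟪hessP P x s, s⟫ with hq
  set M : ℝ := L₂ * ‖s‖ ^ 3 with hM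
  -- Lipschitz bound on the second derivative along the segment
  have hχ : ∀ t : ℝ, 0 ≤ t → ⟪hessP P (x + t • s) s, s⟫ - q ≤ M * t := by
    intro t ht
    have h1 : ⟪hessP P (x + t • s) s, s⟫ - q = ⟪(hessP P (x + t • s) - hessP P x) s, s⟫ := by
      simp [hq, inner_sub_left]
    rw [h1]
    calc ⟪(hessP P (x + t • s) - hessP P x) s, s⟫
        ≤ ‖(hessP P (x + t • s) - hessP P x) s‖ * ‖s‖ := real_inner_le_norm _ _
      _ ≤ ‖hessP P (x + t • s) - hessP P x‖ * ‖s‖ * ‖s‖ := by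
          gcongr; exact (hessP P (x + t • s) - hessP P x).le_opNorm s
      _ ≤ (L₂ * ‖(x + t • s) - x‖) * ‖s‖ * ‖s‖ := by
          exact mul_le_mul_of_nonneg_right (mul_le_mul_of_nonneg_right
            (hhessLip (x + t • s) x) (norm_nonneg s)) (norm_nonneg s)
      _ = M * t := by
          rw [add_sub_cancel_left, norm_smul]
          simp [hM, Real.norm_eq_abs, abs_of_nonneg ht]
          ring
  -- first antitone step : η t ≤ 0 on [0,1]
  set η : ℝ → ℝ := fun t => ⟪gradient P (x + t • s), s⟫ - c - q * t - M * t ^ 2 / 2 with hη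
  have hη' : ∀ t : ℝ, HasDerivAt η (⟪hessP P (x + t • s) s, s⟫ - q - M * t) t := by
    intro t
    have h1 : HasDerivAt (fun t : ℝ => c + q * t + M * t ^ 2 / 2) (q + M * t) t := by
      have h2 : HasDerivAt (fun t : ℝ => M * t ^ 2 / 2) (M * t) t := by
        have h := ((hasDerivAt_pow 2 t).const_mul M).div_const 2
        convert h using 1
        · rfl
        · rfl
        push_cast; ring
      have h3 : HasDerivAt (fun t : ℝ => c + q * t) q t := by
        simpa using ((hasDerivAt_id t).const_mul q).const_add c
      exact h3.add h2
    have := (hψ t).sub h1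
    convert this using 1
    · rfl
    · rfl
    · funext u; simp only [hη, Pi.sub_apply]; ring
    · ring
  have hηle : ∀ t ∈ Set.Icc (0:ℝ) 1, η t ≤ 0 := by
    have hanti : AntitoneOn η (Set.Icc (0:ℝ) 1) := by
      apply antitoneOn_of_deriv_nonpos (convex_Icc 0 1)
      · exact fun t _ => ((hη' t).continuousAt).continuousWithinAt
      · exact fun t _ => ((hη' t).differentiableAt).differentiableWithinAt
      · intro t ht
        rw [interior_Icc] at ht
        rw [(hη' t).deriv]
        have := hχ t (le_of_lt ht.1)
        linarith
    intro t ht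
    have h0 : η 0 = 0 := by simp [hη, hc]
    have := hanti (Set.left_mem_Icc.2 zero_le_one) ht ht.1
    linarith [this]
  -- second antitone step
  set Φ : ℝ → ℝ := fun t => P (x + t • s) - P x - c * t - q * t ^ 2 / 2 - M * t ^ 3 / 6 with hΦ
  have hΦ' : ∀ t : ℝ, HasDerivAt Φ (η t) t := by
    intro t
    have h2 : HasDerivAt (fun t : ℝ => q * t ^ 2 / 2) (q * t) t := by
      have h := ((hasDerivAt_pow 2 t).const_mul q).div_const 2
      convert h using 1
      · rfl
      · rfl
      push_cast; ring
    have h3 : HasDerivAt (fun t : ℝ => M * t ^ 3 / 6) (M * t ^ 2 / 2) t := by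
      have h := ((hasDerivAt_pow 3 t).const_mul M).div_const 6
      convert h using 1
      · rfl
      · rfl
      push_cast; ring
    have h4 : HasDerivAt (fun t : ℝ => P x + c * t) c t := by
      simpa using ((hasDerivAt_id t).const_mul c).const_add (P x)
    have h5 := ((hφ t).sub h4).sub h2 |>.sub h3
    have e1 : Φ = fun u : ℝ =>
        ((P (x + u • s) - (P x + c * u)) - q * u ^ 2 / 2) - M * u ^ 3 / 6 := by
      funext u; simp only [hΦ]; ring
    have e2 : η t = ((⟪gradient P (x + t • s), s⟫ - c) - q * t) - M * t ^ 2 / 2 := by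
      simp only [hη]
    rw [e1, e2]
    exact h5
  have hΦ1 : Φ 1 ≤ 0 := by
    have hanti : AntitoneOn Φ (Set.Icc (0:ℝ) 1) := by
      apply antitoneOn_of_deriv_nonpos (convex_Icc 0 1)
      · exact fun t _ => ((hΦ' t).continuousAt).continuousWithinAt
      · exact fun t _ => ((hΦ' t).differentiableAt).differentiableWithinAt
      · intro t ht
        rw [interior_Icc] at ht
        rw [(hΦ' t).deriv]
        exact hηle t ⟨le_of_lt ht.1, le_of_lt ht.2⟩
    have h0 : Φ 0 = 0 := by simp [hΦ]
    have := hanti (Set.left_mem_Icc.2 zero_le_one) (Set.right_mem_Icc.2 zero_le_one) zero_le_one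
    linarith
  have : Φ 1 = P (x + s) - P x - c - q / 2 - M / 6 := by simp [hΦ]
  rw [this] at hΦ1
  simp only [hM] at hΦ1
  linarith

end aux


/-- If `(H + σ‖g‖^{1/2}I + λI)s = −g` with the regularized operator positive
semidefinite, and the gradient/Hessian estimates are `ε₁`/`ε₂`-accurate, then
`P(x+s) ≤ P(x) − ½(σ‖g‖^{1/2} + λ)‖s‖² + ε₁‖s‖ + (ε₂/2)‖s‖² + (L₂/6)‖s‖³`. -/
theorem statement7 {n : ℕ} (P : En n → ℝ) (L₂ : ℝ)
    (hP : ContDiff ℝ 2 P)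
    (hhessLip : ∀ x x' : En n, ‖hessP P x - hessP P x'‖ ≤ L₂ * ‖x - x'‖)
    (x s g : En n) (H : En n →L[ℝ] En n) (hH : IsSelfAdjoint H)
    (lam σ ε₁ ε₂ : ℝ) (hlam : 0 ≤ lam) (hσ : 0 ≤ σ) (hε₁ : 0 ≤ ε₁) (hε₂ : 0 ≤ ε₂)
    (heq : (H + (σ * Real.sqrt ‖g‖) • (1 : En n →L[ℝ] En n) + lam • 1) s = -g)
    (hpsd : ∀ v : En n,
      0 ≤ ⟪(H + (σ * Real.sqrt ‖g‖) • (1 : En n →L[ℝ] En n) + lam • 1) v, v⟫)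
    (hge : ‖gradient P x - g‖ ≤ ε₁)
    (hHe : ‖hessP P x - H‖ ≤ ε₂) :
    P (x + s) ≤ P x - 1 / 2 * (σ * Real.sqrt ‖g‖ + lam) * ‖s‖ ^ 2
      + ε₁ * ‖s‖ + ε₂ / 2 * ‖s‖ ^ 2 + L₂ / 6 * ‖s‖ ^ 3 := by
  set μ : ℝ := σ * Real.sqrt ‖g‖ + lam with hμ
  have htaylor := taylor_bound P L₂ hP hhessLip x s
  -- gradient estimate
  have hc : ⟪gradient P x, s⟫ ≤ ⟪g, s⟫ + ε₁ * ‖s‖ := by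
    have h1 : ⟪gradient P x, s⟫ - ⟪g, s⟫ = ⟪gradient P x - g, s⟫ := by
      rw [inner_sub_left]
    have h2 : ⟪gradient P x - g, s⟫ ≤ ‖gradient P x - g‖ * ‖s‖ := real_inner_le_norm _ _
    nlinarith [norm_nonneg s, norm_nonneg (gradient P x - g)]
  -- Hessian estimate
  have hq : ⟪hessP P x s, s⟫ ≤ ⟪H s, s⟫ + ε₂ * ‖s‖ ^ 2 := by
    have h1 : ⟪hessP P x s, s⟫ - ⟪H s, s⟫ = ⟪(hessP P x - H) s, s⟫ := by
      simp [inner_sub_left]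
    have h2 : ⟪(hessP P x - H) s, s⟫ ≤ ‖(hessP P x - H) s‖ * ‖s‖ := real_inner_le_norm _ _
    have h3 : ‖(hessP P x - H) s‖ ≤ ‖hessP P x - H‖ * ‖s‖ := (hessP P x - H).le_opNorm s
    nlinarith [norm_nonneg s, norm_nonneg (hessP P x - H), norm_nonneg ((hessP P x - H) s)]
  -- the equation
  have happ : ∀ v : En n,
      (H + (σ * Real.sqrt ‖g‖) • (1 : En n →L[ℝ] En n) + lam • 1) v = H v + μ • v := by
    intro v
    simp [hμ, add_smul, add_assoc]
  have hgs : ⟪g, s⟫ = -⟪H s, s⟫ - μ * ‖s‖ ^ 2 := by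
    have h1 : H s + μ • s = -g := by rw [← happ s]; exact heq
    have h2 : ⟪H s + μ • s, s⟫ = ⟪-g, s⟫ := by rw [h1]
    rw [inner_add_left, real_inner_smul_left, inner_neg_left, real_inner_self_eq_norm_sq] at h2
    linarith
  -- positive semidefiniteness at s
  have hpsd' : -⟪H s, s⟫ ≤ μ * ‖s‖ ^ 2 := by
    have := hpsd s
    rw [happ s, inner_add_left, real_inner_smul_left, real_inner_self_eq_norm_sq] at this
    linarith
  nlinarith [htaylor, hc, hq, hgs, hpsd', sq_nonneg ‖s‖]
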